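/- Let ν be a probability measure on [0,∞)² with finite moments of all orders, and define its transform ν̂(n,m) = ∫ D(n,m;x,y) ν(dx dy) where D(n,m;x,y) = x^n y^m/((n+1)!(m+1)!). Then ν satisfies ∫ P f dν = ∫ f dν for every polynomial f on ℝ² (where P f(x,y) = ∫₀¹∫₀¹ f(x(1−u)+yv, y(1−v)+xu) du dv) if and only if ν̂ is harmonic for the dual generator, i.e. Σ_{k=0}^{n} Σ_{l=0}^{m} (1/((n+1)(m+1))) ν̂(n−k+l, m−l+k) = ν̂(n,m) for all n,m ∈ ℕ. -/

import Mathlib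

open MeasureTheory Finset
set_option maxHeartbeats 1000000

/-- The duality polynomial `D(n,m;x,y) = xⁿ yᵐ / ((n+1)! (m+1)!)`. -/
noncomputable def dualityD (n m : ℕ) (x y : ℝ) : ℝ :=
  x ^ n * y ^ m / ((Nat.factorial (n + 1) : ℝ) * (Nat.factorial (m + 1) : ℝ))

/-- Beta integral with natural exponents. -/
lemma beta_nat (k j : ℕ) :
    ∫ x in (0:ℝ)..1, x ^ k * (1 - x) ^ j
      = (k.factorial : ℝ) * j.factorial / (k + j + 1).factorial := by
  induction j generalizing k with
  | zero =>
    simp only [pow_zero, mul_one, integral_pow, Nat.factorial]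
    push_cast
    rw [one_pow]
    have hk : ((k:ℝ)+1) ≠ 0 := by positivity
    have hf : (k.factorial : ℝ) ≠ 0 := by positivity
    field_simp
    simp
  | succ j ih =>
    have key : ∫ x in (0:ℝ)..1, ((k:ℝ)+1) * (x ^ k * (1-x)^(j+1)) - ((j:ℝ)+1) * (x^(k+1) * (1-x)^j) = 0 := by
      have hder : ∀ x ∈ Set.uIcc (0:ℝ) 1, HasDerivAt (fun x : ℝ => x ^ (k+1) * (1-x)^(j+1))
          (((k:ℝ)+1) * (x ^ k * (1-x)^(j+1)) - ((j:ℝ)+1) * (x^(k+1) * (1-x)^j)) x := by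
        intro x _
        have h1 : HasDerivAt (fun x : ℝ => x ^ (k+1)) (((k:ℝ)+1) * x ^ k) x := by
          simpa using (hasDerivAt_pow (k+1) x)
        have h2 : HasDerivAt (fun x : ℝ => (1-x)^(j+1)) (-(((j:ℝ)+1) * (1-x)^j)) x := by
          have := ((hasDerivAt_pow (j+1) (1-x)).comp x ((hasDerivAt_id x).const_sub 1))
          simpa [Function.comp_def] using this
        have := h1.mul h2
        refine this.congr_deriv ?_
        push_cast
        ring
      have := intervalIntegral.integral_eq_sub_of_hasDerivAt hder ?_
      · rw [this]; norm_num
      · apply Continuous.intervalIntegrable; continuity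
    have hint1 : IntervalIntegrable (fun x : ℝ => x ^ k * (1-x)^(j+1)) volume 0 1 := by
      apply Continuous.intervalIntegrable; continuity
    have hint2 : IntervalIntegrable (fun x : ℝ => x ^ (k+1) * (1-x)^j) volume 0 1 := by
      apply Continuous.intervalIntegrable; continuity
    rw [intervalIntegral.integral_sub (hint1.const_mul _) (hint2.const_mul _),
      intervalIntegral.integral_const_mul, intervalIntegral.integral_const_mul, sub_eq_zero] at key
    have hk : ((k:ℝ)+1) ≠ 0 := by positivity
    have : (∫ x in (0:ℝ)..1, x ^ k * (1-x)^(j+1))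
        = (((j:ℝ)+1) / ((k:ℝ)+1)) * ∫ x in (0:ℝ)..1, x ^ (k+1) * (1-x)^j := by
      field_simp
      linarith [key]
    rw [this, ih (k+1)]
    have e1 : k + 1 + j + 1 = k + (j + 1) + 1 := by ring
    rw [e1]
    rw [Nat.factorial_succ (k), Nat.factorial_succ (j)]
    have hfac : ((k + (j+1) + 1).factorial : ℝ) ≠ 0 := by positivity
    push_cast
    field_simp

/-- The inner integral value. -/
noncomputable def innerVal (n m : ℕ) (x y u : ℝ) : ℝ :=
  ∑ k ∈ range (n+1), ∑ l ∈ range (m+1),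
    ((n.choose k : ℝ) * (m.choose l) *
        (((n-k).factorial : ℝ) * (l.factorial : ℝ) / (((n-k)+l+1).factorial : ℝ)))
      * ((x*(1-u))^k * y^(n-k) * y^l * (x*u)^(m-l))

/-- Value of `P` applied to the monomial `x^n y^m`. -/
noncomputable def PMfun (n m : ℕ) (x y : ℝ) : ℝ :=
  ∑ k ∈ range (n+1), ∑ l ∈ range (m+1),
    ((n.factorial : ℝ) * (m.factorial : ℝ)
        / (((n-k+l+1).factorial : ℝ) * ((m-l+k+1).factorial : ℝ)))
      * (x^(n-k+l) * y^(m-l+k))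

lemma inner_formula (n m : ℕ) (x y u : ℝ) :
    (∫ v in (0:ℝ)..1, (x*(1-u)+y*v)^n * (y*(1-v)+x*u)^m) = innerVal n m x y u := by
  have expand : ∀ v : ℝ, (x*(1-u)+y*v)^n * (y*(1-v)+x*u)^m
      = ∑ k ∈ range (n+1), ∑ l ∈ range (m+1),
          (((n.choose k : ℝ)*(m.choose l)) * ((x*(1-u))^k * y^(n-k) * y^l * (x*u)^(m-l)))
            * (v^(n-k) * (1-v)^l) := by
    intro v
    rw [add_pow, add_pow, Finset.sum_mul_sum]
    refine Finset.sum_congr rfl fun k _ => Finset.sum_congr rfl fun l _ => ?_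
    rw [mul_pow y v, mul_pow y (1-v)]
    ring
  simp only [expand]
  rw [intervalIntegral.integral_finset_sum (fun k _ => ?_)]
  · unfold innerVal
    refine Finset.sum_congr rfl fun k _ => ?_
    rw [intervalIntegral.integral_finset_sum (fun l _ => ?_)]
    · refine Finset.sum_congr rfl fun l _ => ?_
      rw [intervalIntegral.integral_const_mul, beta_nat]
      ring
    · exact Continuous.intervalIntegrable (by continuity) _ _
  · apply Continuous.intervalIntegrable
    apply continuous_finset_sum
    intro l _
    continuity

lemma sum_reflect' (N : ℕ) (F : ℕ → ℝ) :
    ∑ k ∈ range (N+1), F k = ∑ k ∈ range (N+1), F (N - k) := by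
  simpa using (Finset.sum_range_reflect F (N+1)).symm

lemma outer_formula (n m : ℕ) (x y : ℝ) :
    (∫ u in (0:ℝ)..1, innerVal n m x y u) = PMfun n m x y := by
  unfold innerVal PMfun
  rw [intervalIntegral.integral_finset_sum (fun k _ => ?_)]
  swap
  · apply Continuous.intervalIntegrable
    apply continuous_finset_sum
    intro l _
    continuity
  have step : ∀ k ∈ range (n+1),
      (∫ u in (0:ℝ)..1, ∑ l ∈ range (m+1),
        ((n.choose k : ℝ) * (m.choose l) *
            (((n-k).factorial : ℝ) * (l.factorial : ℝ) / (((n-k)+l+1).factorial : ℝ)))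
          * ((x*(1-u))^k * y^(n-k) * y^l * (x*u)^(m-l)))
      = ∑ l ∈ range (m+1),
          ((n.choose k : ℝ) * (m.choose l) *
            (((n-k).factorial : ℝ) * (l.factorial : ℝ) / (((n-k)+l+1).factorial : ℝ))
            * (((m-l).factorial : ℝ) * (k.factorial : ℝ) / (((m-l)+k+1).factorial : ℝ)))
          * (x^(k+(m-l)) * y^((n-k)+l)) := by
    intro k _
    rw [intervalIntegral.integral_finset_sum (fun l _ => ?_)]
    · refine Finset.sum_congr rfl fun l _ => ?_
      have : ∀ u : ℝ, ((n.choose k : ℝ) * (m.choose l) *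
            (((n-k).factorial : ℝ) * (l.factorial : ℝ) / (((n-k)+l+1).factorial : ℝ)))
          * ((x*(1-u))^k * y^(n-k) * y^l * (x*u)^(m-l))
          = (((n.choose k : ℝ) * (m.choose l) *
            (((n-k).factorial : ℝ) * (l.factorial : ℝ) / (((n-k)+l+1).factorial : ℝ)))
            * (x^(k+(m-l)) * y^((n-k)+l))) * (u^(m-l) * (1-u)^k) := by
        intro u
        rw [mul_pow x (1-u), mul_pow x u, pow_add x, pow_add y]
        ring
      simp only [this]
      rw [intervalIntegral.integral_const_mul, beta_nat]
      ring
    · exact Continuous.intervalIntegrable (by continuity) _ _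
  rw [Finset.sum_congr rfl step]
  rw [sum_reflect' n]
  refine Finset.sum_congr rfl fun k hk => ?_
  rw [sum_reflect' m]
  refine Finset.sum_congr rfl fun l hl => ?_
  have hk' : k ≤ n := by simpa using Nat.lt_succ_iff.mp (mem_range.mp hk)
  have hl' : l ≤ m := by simpa using Nat.lt_succ_iff.mp (mem_range.mp hl)
  have e1 : n - (n - k) = k := Nat.sub_sub_self hk'
  have e2 : m - (m - l) = l := Nat.sub_sub_self hl'
  rw [Nat.choose_symm hk', Nat.choose_symm hl', e1, e2]
  have e3 : l + (n - k) + 1 = n - k + l + 1 := by omega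
  have e4 : k + (m - l) + 1 = m - l + k + 1 := by omega
  rw [e3, e4, Nat.add_comm k (m - l)]
  congr 1
  have hn : (n.choose k : ℝ) * k.factorial * (n-k).factorial = n.factorial := by
    exact_mod_cast Nat.choose_mul_factorial_mul_factorial hk'
  have hm : (m.choose l : ℝ) * l.factorial * (m-l).factorial = m.factorial := by
    exact_mod_cast Nat.choose_mul_factorial_mul_factorial hl'
  have d1 : ((n-k+l+1).factorial : ℝ) ≠ 0 := by positivity
  have d2 : ((m-l+k+1).factorial : ℝ) ≠ 0 := by positivity
  rw [← hn, ← hm]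
  field_simp

lemma innerVal_cont (n m : ℕ) (x y : ℝ) : Continuous (fun u => innerVal n m x y u) := by
  unfold innerVal
  apply continuous_finset_sum; intro k _
  apply continuous_finset_sum; intro l _
  continuity

lemma double_mono (n m : ℕ) (x y : ℝ) :
    (∫ u in (0:ℝ)..1, ∫ v in (0:ℝ)..1, (x*(1-u)+y*v)^n * (y*(1-v)+x*u)^m)
      = PMfun n m x y := by
  simp only [inner_formula]
  exact outer_formula n m x y

lemma eval_expand (f : MvPolynomial (Fin 2) ℝ) (a b : ℝ) :
    MvPolynomial.eval ![a, b] f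
      = ∑ d ∈ f.support, f.coeff d * (a ^ d 0 * b ^ d 1) := by
  rw [MvPolynomial.eval_eq]
  refine Finset.sum_congr rfl fun d _ => ?_
  congr 1
  rw [show (∏ i ∈ d.support, ![a, b] i ^ d i) = ∏ i : Fin 2, ![a, b] i ^ d i from
    Finset.prod_subset (Finset.subset_univ _)
      (fun i _ hi => by simp [Finsupp.notMem_support_iff.mp hi]),
    Fin.prod_univ_two]
  simp

lemma gen_double (f : MvPolynomial (Fin 2) ℝ) (x y : ℝ) :
    (∫ u in (0:ℝ)..1, ∫ v in (0:ℝ)..1,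
        MvPolynomial.eval ![x*(1-u)+y*v, y*(1-v)+x*u] f)
      = ∑ d ∈ f.support, f.coeff d * PMfun (d 0) (d 1) x y := by
  simp only [eval_expand]
  have inner_eq : ∀ u : ℝ,
      (∫ v in (0:ℝ)..1, ∑ d ∈ f.support,
          f.coeff d * ((x*(1-u)+y*v) ^ d 0 * (y*(1-v)+x*u) ^ d 1))
        = ∑ d ∈ f.support, f.coeff d * innerVal (d 0) (d 1) x y u := by
    intro u
    rw [intervalIntegral.integral_finset_sum
      (fun d _ => Continuous.intervalIntegrable (by fun_prop) _ _)]
    refine Finset.sum_congr rfl fun d _ => ?_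
    rw [intervalIntegral.integral_const_mul, inner_formula]
  simp only [inner_eq]
  have h2 := intervalIntegral.integral_finset_sum (μ := MeasureTheory.volume)
    (a := (0:ℝ)) (b := 1) (s := f.support)
    (f := fun d u => f.coeff d * innerVal (d 0) (d 1) x y u)
    (fun d _ =>
      Continuous.intervalIntegrable (continuous_const.mul (innerVal_cont (d 0) (d 1) x y)) _ _)
  rw [h2]
  refine Finset.sum_congr rfl fun d _ => ?_
  rw [intervalIntegral.integral_const_mul, outer_formula]

lemma PM_integrable (ν : Measure (ℝ × ℝ))
    (hmom : ∀ n m : ℕ, Integrable (fun p : ℝ × ℝ => p.1 ^ n * p.2 ^ m) ν) (n m : ℕ) :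
    Integrable (fun p : ℝ × ℝ => PMfun n m p.1 p.2) ν := by
  unfold PMfun
  apply integrable_finset_sum; intro k _
  apply integrable_finset_sum; intro l _
  exact (hmom _ _).const_mul _

lemma PM_integral (ν : Measure (ℝ × ℝ))
    (hmom : ∀ n m : ℕ, Integrable (fun p : ℝ × ℝ => p.1 ^ n * p.2 ^ m) ν) (n m : ℕ) :
    (∫ p : ℝ × ℝ, PMfun n m p.1 p.2 ∂ν)
      = ∑ k ∈ range (n+1), ∑ l ∈ range (m+1),
          ((n.factorial : ℝ) * (m.factorial : ℝ)
              / (((n-k+l+1).factorial : ℝ) * ((m-l+k+1).factorial : ℝ)))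
            * (∫ p : ℝ × ℝ, p.1^(n-k+l) * p.2^(m-l+k) ∂ν) := by
  unfold PMfun
  rw [MeasureTheory.integral_finset_sum _ (fun k _ => integrable_finset_sum _
    (fun l _ => (hmom _ _).const_mul _))]
  refine Finset.sum_congr rfl fun k _ => ?_
  rw [MeasureTheory.integral_finset_sum _ (fun l _ => (hmom _ _).const_mul _)]
  exact Finset.sum_congr rfl fun l _ => MeasureTheory.integral_const_mul _ _

lemma dual_int (ν : Measure (ℝ × ℝ)) (a b : ℕ) :
    (∫ p : ℝ × ℝ, dualityD a b p.1 p.2 ∂ν)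
      = (∫ p : ℝ × ℝ, p.1^a * p.2^b ∂ν)
          / (((a+1).factorial : ℝ) * ((b+1).factorial : ℝ)) := by
  unfold dualityD
  exact integral_div _ _

lemma eval_integral (ν : Measure (ℝ × ℝ))
    (hmom : ∀ n m : ℕ, Integrable (fun p : ℝ × ℝ => p.1 ^ n * p.2 ^ m) ν)
    (f : MvPolynomial (Fin 2) ℝ) :
    (∫ p : ℝ × ℝ, MvPolynomial.eval ![p.1, p.2] f ∂ν)
      = ∑ d ∈ f.support, f.coeff d * ∫ p : ℝ × ℝ, p.1 ^ d 0 * p.2 ^ d 1 ∂ν := by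
  simp only [eval_expand]
  rw [MeasureTheory.integral_finset_sum _ (fun d _ => (hmom _ _).const_mul _)]
  exact Finset.sum_congr rfl fun d _ => MeasureTheory.integral_const_mul _ _

lemma harm_iff (ν : Measure (ℝ × ℝ)) (n m : ℕ) :
    (∑ k ∈ Finset.range (n + 1), ∑ l ∈ Finset.range (m + 1),
          (1 / (((n : ℝ) + 1) * ((m : ℝ) + 1))) *
            (∫ p : ℝ × ℝ, dualityD (n - k + l) (m - l + k) p.1 p.2 ∂ν)
        = ∫ p : ℝ × ℝ, dualityD n m p.1 p.2 ∂ν)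
    ↔ (∑ k ∈ range (n+1), ∑ l ∈ range (m+1),
          ((n.factorial : ℝ) * (m.factorial : ℝ)
              / (((n-k+l+1).factorial : ℝ) * ((m-l+k+1).factorial : ℝ)))
            * (∫ p : ℝ × ℝ, p.1^(n-k+l) * p.2^(m-l+k) ∂ν)
        = ∫ p : ℝ × ℝ, p.1^n * p.2^m ∂ν) := by
  simp only [dual_int]
  set c0 : ℝ := ((n+1).factorial : ℝ) * ((m+1).factorial : ℝ) with hc0def
  have hc0 : c0 ≠ 0 := by positivity
  have hterm : ∀ k l : ℕ,
      ((n.factorial : ℝ) * (m.factorial : ℝ)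
          / (((n-k+l+1).factorial : ℝ) * ((m-l+k+1).factorial : ℝ)))
        * (∫ p : ℝ × ℝ, p.1^(n-k+l) * p.2^(m-l+k) ∂ν)
      = ((1 / (((n : ℝ) + 1) * ((m : ℝ) + 1))) *
          ((∫ p : ℝ × ℝ, p.1^(n-k+l) * p.2^(m-l+k) ∂ν)
            / (((n-k+l+1).factorial : ℝ) * ((m-l+k+1).factorial : ℝ)))) * c0 := by
    intro k l
    rw [hc0def]
    have h1 : ((n+1).factorial : ℝ) = ((n:ℝ)+1) * (n.factorial : ℝ) := by
      rw [Nat.factorial_succ]; push_cast; ring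
    have h2 : ((m+1).factorial : ℝ) = ((m:ℝ)+1) * (m.factorial : ℝ) := by
      rw [Nat.factorial_succ]; push_cast; ring
    rw [h1, h2]
    have d1 : ((n-k+l+1).factorial : ℝ) ≠ 0 := by positivity
    have d2 : ((m-l+k+1).factorial : ℝ) ≠ 0 := by positivity
    have d3 : ((n:ℝ)+1) ≠ 0 := by positivity
    have d4 : ((m:ℝ)+1) ≠ 0 := by positivity
    field_simp
  have hsum :
      (∑ k ∈ range (n+1), ∑ l ∈ range (m+1),
          ((n.factorial : ℝ) * (m.factorial : ℝ)
              / (((n-k+l+1).factorial : ℝ) * ((m-l+k+1).factorial : ℝ)))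
            * (∫ p : ℝ × ℝ, p.1^(n-k+l) * p.2^(m-l+k) ∂ν))
      = (∑ k ∈ range (n+1), ∑ l ∈ range (m+1),
          (1 / (((n : ℝ) + 1) * ((m : ℝ) + 1))) *
            ((∫ p : ℝ × ℝ, p.1^(n-k+l) * p.2^(m-l+k) ∂ν)
              / (((n-k+l+1).factorial : ℝ) * ((m-l+k+1).factorial : ℝ)))) * c0 := by
    rw [Finset.sum_mul]
    refine Finset.sum_congr rfl fun k _ => ?_
    rw [Finset.sum_mul]
    exact Finset.sum_congr rfl fun l _ => hterm k l
  rw [hsum]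
  exact eq_div_iff hc0

theorem immediate_exchange_invariant_iff_transform_harmonic
    (ν : Measure (ℝ × ℝ)) [IsProbabilityMeasure ν]
    (hsupp : ν {p : ℝ × ℝ | p.1 < 0 ∨ p.2 < 0} = 0)
    (hmom : ∀ n m : ℕ, Integrable (fun p : ℝ × ℝ => p.1 ^ n * p.2 ^ m) ν) :
    (∀ f : MvPolynomial (Fin 2) ℝ,
        (∫ p : ℝ × ℝ, (∫ u in (0:ℝ)..1, ∫ v in (0:ℝ)..1,
            MvPolynomial.eval ![p.1 * (1 - u) + p.2 * v, p.2 * (1 - v) + p.1 * u] f) ∂ν)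
          = ∫ p : ℝ × ℝ, MvPolynomial.eval ![p.1, p.2] f ∂ν)
    ↔ (∀ n m : ℕ,
        ∑ k ∈ Finset.range (n + 1), ∑ l ∈ Finset.range (m + 1),
          (1 / (((n : ℝ) + 1) * ((m : ℝ) + 1))) *
            (∫ p : ℝ × ℝ, dualityD (n - k + l) (m - l + k) p.1 p.2 ∂ν)
        = ∫ p : ℝ × ℝ, dualityD n m p.1 p.2 ∂ν) := by
  constructor
  · intro hinv n m
    rw [harm_iff ν n m]
    have h := hinv (MvPolynomial.X 0 ^ n * MvPolynomial.X 1 ^ m)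
    simp only [map_mul, map_pow, MvPolynomial.eval_X, Matrix.cons_val_zero,
      Matrix.cons_val_one, Matrix.head_cons] at h
    simp only [double_mono] at h
    rw [PM_integral ν hmom n m] at h
    exact h
  · intro hharm f
    have momid : ∀ n m : ℕ,
        (∑ k ∈ range (n+1), ∑ l ∈ range (m+1),
          ((n.factorial : ℝ) * (m.factorial : ℝ)
              / (((n-k+l+1).factorial : ℝ) * ((m-l+k+1).factorial : ℝ)))
            * (∫ p : ℝ × ℝ, p.1^(n-k+l) * p.2^(m-l+k) ∂ν))
          = ∫ p : ℝ × ℝ, p.1^n * p.2^m ∂ν :=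
      fun n m => (harm_iff ν n m).mp (hharm n m)
    simp only [gen_double]
    rw [MeasureTheory.integral_finset_sum _
      (fun d _ => (PM_integrable ν hmom (d 0) (d 1)).const_mul _)]
    rw [eval_integral ν hmom f]
    refine Finset.sum_congr rfl fun d _ => ?_
    rw [MeasureTheory.integral_const_mul, PM_integral ν hmom, momid (d 0) (d 1)]
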